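/- Let a > 0 and ν > 0, and let F : (0,∞) → ℝ be the UTD transition function F(x) = 2√x · √( (√(2π)/4 − ∫₀^{√x} cos(y²) dy)² + (√(2π)/4 − ∫₀^{√x} sin(y²) dy)² ). Then, as δ → 0 from the right, −(ν/(2√(πa))) · cot(νδ/2) · F(a·sin²(δ/2)) tends to −1/2, i.e. lim_{δ→0⁺} −(ν/(2√(πa))) cot(νδ/2) F(a sin²(δ/2)) = −1/2. -/

import Mathlib

open Real

/-- The Kouyoumjian–Pathak (UTD) transition function, expressed via Fresnel integrals:
`F(x) = 2√x · √( (√(2π)/4 − ∫₀^{√x} cos(y²) dy)² + (√(2π)/4 − ∫₀^{√x} sin(y²) dy)² )`. -/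
noncomputable def utdTransition (x : ℝ) : ℝ :=
  2 * Real.sqrt x *
    Real.sqrt ((Real.sqrt (2 * π) / 4 - ∫ y in (0 : ℝ)..Real.sqrt x, Real.cos (y ^ 2)) ^ 2 +
      (Real.sqrt (2 * π) / 4 - ∫ y in (0 : ℝ)..Real.sqrt x, Real.sin (y ^ 2)) ^ 2)

/-- `sin u / u → 1` as `u → 0` from the right. -/
lemma sinc_tendsto_one :
    Filter.Tendsto (fun u : ℝ => Real.sin u / u) (nhdsWithin 0 (Set.Ioi 0)) (nhds 1) := by
  have h := (Real.hasDerivAt_sin 0)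
  rw [hasDerivAt_iff_tendsto_slope] at h
  have h2 : Filter.Tendsto (slope Real.sin 0) (nhdsWithin 0 (Set.Ioi 0)) (nhds (Real.cos 0)) :=
    h.mono_left (nhdsWithin_mono 0 (by intro x hx; exact ne_of_gt hx))
  rw [Real.cos_zero] at h2
  refine h2.congr fun u => ?_
  simp [slope_def_field]

theorem utd_shadow_boundary_limit (a ν : ℝ) (ha : 0 < a) (hν : 0 < ν) :
    Filter.Tendsto
      (fun δ : ℝ => -(ν / (2 * Real.sqrt (π * a))) * Real.cot (ν * δ / 2) *
        utdTransition (a * Real.sin (δ / 2) ^ 2))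
      (nhdsWithin 0 (Set.Ioi 0)) (nhds (-1 / 2)) := by
  set L := nhdsWithin (0:ℝ) (Set.Ioi 0)
  set D : ℝ → ℝ := fun δ =>
    Real.sqrt ((Real.sqrt (2 * π) / 4 -
        ∫ y in (0:ℝ)..(Real.sqrt a * Real.sin (δ / 2)), Real.cos (y ^ 2)) ^ 2 +
      (Real.sqrt (2 * π) / 4 -
        ∫ y in (0:ℝ)..(Real.sqrt a * Real.sin (δ / 2)), Real.sin (y ^ 2)) ^ 2) with hD_def
  -- continuity of the primitives
  have cint : Continuous fun t : ℝ => ∫ y in (0:ℝ)..t, Real.cos (y ^ 2) :=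
    intervalIntegral.continuous_primitive
      (fun a b => ((Real.continuous_cos.comp (continuous_pow 2)).intervalIntegrable a b)) 0
  have sint : Continuous fun t : ℝ => ∫ y in (0:ℝ)..t, Real.sin (y ^ 2) :=
    intervalIntegral.continuous_primitive
      (fun a b => ((Real.continuous_sin.comp (continuous_pow 2)).intervalIntegrable a b)) 0
  have cmap : Continuous fun δ : ℝ => Real.sqrt a * Real.sin (δ / 2) :=
    continuous_const.mul (Real.continuous_sin.comp (continuous_id.div_const 2))
  have hDcont : Continuous D := by
    apply Real.continuous_sqrt.comp
    exact (((continuous_const.sub (cint.comp cmap)).pow 2).add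
      ((continuous_const.sub (sint.comp cmap)).pow 2))
  have hDval : D 0 = Real.sqrt π / 2 := by
    have e : D 0 = Real.sqrt ((Real.sqrt (2 * π) / 4) ^ 2 + (Real.sqrt (2 * π) / 4) ^ 2) := by
      rw [hD_def]
      simp only [zero_div, Real.sin_zero, mul_zero, intervalIntegral.integral_same, sub_zero]
    rw [e, show (Real.sqrt (2 * π) / 4) ^ 2 + (Real.sqrt (2 * π) / 4) ^ 2
        = (Real.sqrt π / 2) ^ 2 by
      rw [div_pow, div_pow, Real.sq_sqrt (by positivity : (0:ℝ) ≤ 2 * π),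
        Real.sq_sqrt Real.pi_pos.le]; ring,
      Real.sqrt_sq (by positivity)]
  have hD : Filter.Tendsto D L (nhds (Real.sqrt π / 2)) := by
    have := hDcont.tendsto 0
    rw [hDval] at this
    exact this.mono_left nhdsWithin_le_nhds
  -- the sinc limits
  have hhalf : Filter.Tendsto (fun δ : ℝ => δ / 2) L L := by
    apply tendsto_nhdsWithin_of_tendsto_nhds_of_eventually_within
    · exact ((continuous_id.div_const 2).tendsto 0).mono_left nhdsWithin_le_nhds |>.congr
        (fun x => rfl) |>.mono_right (by simp)
    · filter_upwards [self_mem_nhdsWithin] with x hx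
      exact Set.mem_Ioi.mpr (div_pos hx (two_pos : (0:ℝ) < 2))
  have hnuhalf : Filter.Tendsto (fun δ : ℝ => ν * δ / 2) L L := by
    apply tendsto_nhdsWithin_of_tendsto_nhds_of_eventually_within
    · have : Filter.Tendsto (fun δ : ℝ => ν * δ / 2) (nhds 0) (nhds (ν * 0 / 2)) :=
        ((continuous_const.mul continuous_id).div_const 2).tendsto 0
      simpa using this.mono_left nhdsWithin_le_nhds
    · filter_upwards [self_mem_nhdsWithin] with x hx
      exact div_pos (mul_pos hν hx) two_pos
  have hB : Filter.Tendsto (fun δ : ℝ => Real.sin (δ / 2) / (δ / 2)) L (nhds 1) :=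
    sinc_tendsto_one.comp hhalf
  have hC : Filter.Tendsto (fun δ : ℝ => (ν * δ / 2) / Real.sin (ν * δ / 2)) L (nhds 1) := by
    have := ((sinc_tendsto_one.comp hnuhalf).inv₀ one_ne_zero)
    simpa [inv_div] using this
  have hA : Filter.Tendsto (fun δ : ℝ => Real.cos (ν * δ / 2)) L (nhds 1) := by
    have : Filter.Tendsto (fun δ : ℝ => Real.cos (ν * δ / 2)) (nhds 0) (nhds (Real.cos (ν * 0 / 2))) :=
      (Real.continuous_cos.comp ((continuous_const.mul continuous_id).div_const 2)).tendsto 0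
    simpa using this.mono_left nhdsWithin_le_nhds
  -- limit of the product form
  have key : Filter.Tendsto
      (fun δ : ℝ => (-(ν / (2 * Real.sqrt (π * a))) * 2 * Real.sqrt a * (1 / ν)) *
        (Real.cos (ν * δ / 2) * ((Real.sin (δ / 2) / (δ / 2)) *
          (((ν * δ / 2) / Real.sin (ν * δ / 2)) * D δ))))
      L (nhds (-1 / 2)) := by
    have hlim := (Filter.Tendsto.const_mul
      (-(ν / (2 * Real.sqrt (π * a))) * 2 * Real.sqrt a * (1 / ν))
      (hA.mul (hB.mul (hC.mul hD))))
    have hval : (-(ν / (2 * Real.sqrt (π * a))) * 2 * Real.sqrt a * (1 / ν)) *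
        (1 * (1 * (1 * (Real.sqrt π / 2)))) = -1 / 2 := by
      rw [Real.sqrt_mul Real.pi_pos.le]
      have h1 : Real.sqrt π ≠ 0 := by positivity
      have h2 : Real.sqrt a ≠ 0 := by positivity
      field_simp
    rw [← hval]
    simpa using hlim
  -- eventual equality
  apply key.congr'
  have hmem : Set.Ioo (0:ℝ) (min π (2 * π / ν)) ∈ L :=
    Ioo_mem_nhdsGT_of_mem ⟨le_refl 0, lt_min Real.pi_pos (by positivity)⟩
  filter_upwards [hmem] with δ hδ
  obtain ⟨hδ0, hδlt⟩ := hδ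
  have hδπ : δ < π := lt_of_lt_of_le hδlt (min_le_left _ _)
  have hδν : δ < 2 * π / ν := lt_of_lt_of_le hδlt (min_le_right _ _)
  have hsin1 : 0 < Real.sin (δ / 2) :=
    Real.sin_pos_of_pos_of_lt_pi (by positivity) (by linarith [Real.pi_pos])
  have hsin2 : 0 < Real.sin (ν * δ / 2) := by
    have h3 : δ * ν < 2 * π := (lt_div_iff₀ hν).mp hδν
    exact Real.sin_pos_of_pos_of_lt_pi (by positivity) (by nlinarith)
  have hsqrt : Real.sqrt (a * Real.sin (δ / 2) ^ 2) = Real.sqrt a * Real.sin (δ / 2) := by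
    rw [Real.sqrt_mul ha.le, Real.sqrt_sq hsin1.le]
  have hs2 : Real.sin (ν * δ / 2) ≠ 0 := ne_of_gt hsin2
  have hδne : δ ≠ 0 := ne_of_gt hδ0
  have hνne : ν ≠ 0 := ne_of_gt hν
  rw [Real.cot_eq_cos_div_sin, utdTransition, hsqrt, hD_def]
  field_simp
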